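/- Let N ≥ 1 and Q ≥ 1 be integers, and let ψ: ℤ/Nℤ → ℝ be a function all of whose values lie in (2π/Q)ℤ. Let M ≥ 1 be a real number such that ‖e^{inψ}‖_{A(𝕋_N)} ≤ M for every integer n with 0 ≤ n ≤ Q−1. Then the set E = {(x,y,z) ∈ (ℤ/Nℤ)³ : ψ(x)+ψ(z−x)−ψ(y)−ψ(z−y) ∈ 2πℤ} satisfies card(E)/N³ ≥ 1/M². -/

import Mathlib

open scoped Real
open Complex Filter

/-- The Fourier transform on the cyclic group `ℤ/Nℤ`. -/
noncomputable def dftN (N : ℕ) [NeZero N] (g : ZMod N → ℂ) (k : ZMod N) : ℂ :=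
  (1 / (N : ℂ)) * ∑ j : ZMod N,
    g j * Complex.exp (-(2 * (π : ℂ) * Complex.I) * (j.val : ℂ) * (k.val : ℂ) / (N : ℂ))

/-- The `A(𝕋_N)` norm on the cyclic group `ℤ/Nℤ`. -/
noncomputable def normAN (N : ℕ) [NeZero N] (g : ZMod N → ℂ) : ℝ :=
  ∑ k : ZMod N, ‖dftN N g k‖

section aux
variable (N : ℕ) [NeZero N]
open Finset ZMod AddChar

lemma orth_sum (t : ZMod N) :
    ∑ i : ZMod N, stdAddChar (t * i) = if t = 0 then (N : ℂ) else 0 := by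
  split_ifs with h
  · simp [h, ZMod.card]
  · exact AddChar.sum_eq_zero_of_ne_one (isPrimitive_stdAddChar N h)

lemma conj_stdAddChar (a : ZMod N) :
    (starRingEnd ℂ) (stdAddChar a) = stdAddChar (-a) := by
  rw [stdAddChar_apply, stdAddChar_apply, AddChar.map_neg_eq_inv, ← Circle.coe_inv_eq_conj]

lemma dftN_eq (g : ZMod N → ℂ) (k : ZMod N) :
    dftN N g k = (N : ℂ)⁻¹ * ∑ j : ZMod N, stdAddChar (-(j * k)) * g j := by
  rw [dftN, one_div]
  congr 1
  refine Finset.sum_congr rfl fun j _ => ?_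
  rw [mul_comm (stdAddChar _)]
  congr 1
  have h1 : -(j * k) = ((-(j.val * k.val : ℤ) : ℤ) : ZMod N) := by
    push_cast
    rw [ZMod.natCast_zmod_val, ZMod.natCast_zmod_val]
  rw [h1, stdAddChar_coe]
  congr 1
  push_cast
  ring


lemma sum_dft_mul_conj (g : ZMod N → ℂ) :
    ∑ k : ZMod N, dftN N g k * (starRingEnd ℂ) (dftN N g k)
      = (N : ℂ)⁻¹ * ∑ j : ZMod N, g j * (starRingEnd ℂ) (g j) := by
  have hN : (N : ℂ) ≠ 0 := Nat.cast_ne_zero.2 (NeZero.ne N)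
  have key : ∀ k : ZMod N, dftN N g k * (starRingEnd ℂ) (dftN N g k)
      = (N : ℂ)⁻¹ * (N : ℂ)⁻¹ *
        ∑ j : ZMod N, ∑ j' : ZMod N,
          stdAddChar ((j' - j) * k) * (g j * (starRingEnd ℂ) (g j')) := by
    intro k
    rw [dftN_eq, map_mul, map_sum]
    have hconj : ∀ j' : ZMod N, (starRingEnd ℂ) (stdAddChar (-(j' * k)) * g j')
        = stdAddChar (j' * k) * (starRingEnd ℂ) (g j') := by
      intro j'
      rw [map_mul, conj_stdAddChar, neg_neg]
    simp only [hconj, map_inv₀, Complex.conj_natCast]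
    rw [mul_mul_mul_comm, Finset.sum_mul_sum]
    congr 1
    refine Finset.sum_congr rfl fun j _ => Finset.sum_congr rfl fun j' _ => ?_
    rw [show (j' - j) * k = -(j * k) + j' * k by ring, AddChar.map_add_eq_mul]
    ring
  rw [Finset.sum_congr rfl fun k _ => key k, ← Finset.mul_sum]
  rw [show ∑ k : ZMod N, ∑ j : ZMod N, ∑ j' : ZMod N,
        stdAddChar ((j' - j) * k) * (g j * (starRingEnd ℂ) (g j'))
      = ∑ j : ZMod N, ∑ j' : ZMod N, ∑ k : ZMod N,
        stdAddChar ((j' - j) * k) * (g j * (starRingEnd ℂ) (g j')) from by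
    rw [Finset.sum_comm]
    exact Finset.sum_congr rfl fun j _ => Finset.sum_comm]
  have inner : ∀ j j' : ZMod N, ∑ k : ZMod N,
      stdAddChar ((j' - j) * k) * (g j * (starRingEnd ℂ) (g j'))
      = (if j' = j then (N : ℂ) else 0) * (g j * (starRingEnd ℂ) (g j')) := by
    intro j j'
    rw [← Finset.sum_mul, orth_sum]
    congr 1
    simp [sub_eq_zero]
  simp only [inner, ite_mul, zero_mul]
  rw [Finset.sum_congr rfl fun j (_ : j ∈ Finset.univ) =>
    Finset.sum_ite_eq' Finset.univ j (fun j' => (N : ℂ) * (g j * (starRingEnd ℂ) (g j')))]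
  simp only [Finset.mem_univ, if_true]
  rw [← Finset.mul_sum, ← mul_assoc]
  congr 1
  field_simp


lemma parsevalN (g : ZMod N → ℂ) :
    ∑ k : ZMod N, ‖dftN N g k‖ ^ 2 = (N : ℝ)⁻¹ * ∑ j : ZMod N, ‖g j‖ ^ 2 := by
  have h2 : ∀ z : ℂ, z * (starRingEnd ℂ) z = ((‖z‖ ^ 2 : ℝ) : ℂ) := fun z => by
    rw [Complex.mul_conj]
    norm_cast
    rw [Complex.normSq_eq_norm_sq]
  have := sum_dft_mul_conj N g
  simp only [h2] at this
  have h3 : ((∑ k : ZMod N, ‖dftN N g k‖ ^ 2 : ℝ) : ℂ)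
      = (((N : ℝ)⁻¹ * ∑ j : ZMod N, ‖g j‖ ^ 2 : ℝ) : ℂ) := by
    push_cast
    exact_mod_cast this
  exact Complex.ofReal_injective h3

lemma dftN_conv (g : ZMod N → ℂ) (k : ZMod N) :
    dftN N (fun z => ∑ x : ZMod N, g x * g (z - x)) k = (N : ℂ) * (dftN N g k) ^ 2 := by
  have hN : (N : ℂ) ≠ 0 := Nat.cast_ne_zero.2 (NeZero.ne N)
  have step : ∑ z : ZMod N, stdAddChar (-(z * k)) * ∑ x : ZMod N, g x * g (z - x)
      = (∑ x : ZMod N, stdAddChar (-(x * k)) * g x) ^ 2 := by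
    rw [sq, Finset.sum_mul_sum]
    simp only [Finset.mul_sum]
    rw [Finset.sum_comm]
    refine Finset.sum_congr rfl fun x _ => ?_
    calc ∑ z : ZMod N, stdAddChar (-(z * k)) * (g x * g (z - x))
        = ∑ w : ZMod N, stdAddChar (-((w + x) * k)) * (g x * g (w + x - x)) :=
          (Equiv.sum_comp (Equiv.addRight x)
            (fun z => stdAddChar (-(z * k)) * (g x * g (z - x)))).symm
      _ = ∑ w : ZMod N, stdAddChar (-(x * k)) * g x * (stdAddChar (-(w * k)) * g w) := by
          refine Finset.sum_congr rfl fun w _ => ?_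
          rw [add_sub_cancel_right,
            show -((w + x) * k) = -(x * k) + -(w * k) by ring, AddChar.map_add_eq_mul]
          ring
  rw [dftN_eq, step, dftN_eq]
  field_simp


lemma fourth_moment_lb (b : ZMod N → ℝ) (hb : ∀ k, 0 ≤ b k)
    (hX : ∑ k : ZMod N, b k ^ 2 = 1) {M : ℝ} (hM : 0 < M)
    (hA : ∑ k : ZMod N, b k ≤ M) : 1 / M ^ 2 ≤ ∑ k : ZMod N, b k ^ 4 := by
  set S3 := ∑ k : ZMod N, b k ^ 3 with hS3
  have hS3nn : 0 ≤ S3 := Finset.sum_nonneg fun k _ => pow_nonneg (hb k) 3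
  have h1 : 1 ≤ S3 * M := by
    have cs := Finset.sum_mul_sq_le_sq_mul_sq Finset.univ
      (fun k => b k * Real.sqrt (b k)) (fun k => Real.sqrt (b k))
    have e1 : ∑ k : ZMod N, (b k * Real.sqrt (b k)) * Real.sqrt (b k) = 1 := by
      rw [← hX]
      refine Finset.sum_congr rfl fun k _ => ?_
      rw [mul_assoc, Real.mul_self_sqrt (hb k)]
      ring
    have e2 : ∑ k : ZMod N, (b k * Real.sqrt (b k)) ^ 2 = S3 := by
      rw [hS3]
      refine Finset.sum_congr rfl fun k _ => ?_
      rw [mul_pow, Real.sq_sqrt (hb k)]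
      ring
    have e3 : ∑ k : ZMod N, (Real.sqrt (b k)) ^ 2 = ∑ k : ZMod N, b k :=
      Finset.sum_congr rfl fun k _ => Real.sq_sqrt (hb k)
    rw [e1, e2, e3] at cs
    calc (1:ℝ) = 1 ^ 2 := by norm_num
      _ ≤ S3 * (∑ k : ZMod N, b k) := cs
      _ ≤ S3 * M := mul_le_mul_of_nonneg_left hA hS3nn
  have h2 : S3 ^ 2 ≤ ∑ k : ZMod N, b k ^ 4 := by
    have cs := Finset.sum_mul_sq_le_sq_mul_sq Finset.univ (fun k => b k ^ 2) (fun k => b k)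
    have e1 : ∑ k : ZMod N, (b k ^ 2) * b k = S3 := Finset.sum_congr rfl fun k _ => by ring
    have e2 : ∑ k : ZMod N, (b k ^ 2) ^ 2 = ∑ k : ZMod N, b k ^ 4 :=
      Finset.sum_congr rfl fun k _ => by ring
    rw [e1, e2, hX, mul_one] at cs
    exact cs
  rw [div_le_iff₀ (by positivity)]
  nlinarith [sq_nonneg M, sq_nonneg S3]

lemma Rn_lb (f : ZMod N → ℂ) (hf : ∀ j, ‖f j‖ = 1) {M : ℝ} (hM : 1 ≤ M)
    (hA : ∑ k : ZMod N, ‖dftN N f k‖ ≤ M) :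
    (N : ℝ) ^ 3 / M ^ 2 ≤ ∑ z : ZMod N, ‖∑ x : ZMod N, f x * f (z - x)‖ ^ 2 := by
  have hNr : (0:ℝ) < N := Nat.cast_pos.2 (Nat.pos_of_ne_zero (NeZero.ne N))
  have hX : ∑ k : ZMod N, ‖dftN N f k‖ ^ 2 = 1 := by
    rw [parsevalN]
    simp only [hf, one_pow, Finset.sum_const, Finset.card_univ, ZMod.card, nsmul_eq_mul, mul_one]
    field_simp
  have hY := parsevalN N (fun z => ∑ x : ZMod N, f x * f (z - x))
  have hconv : ∑ k : ZMod N, ‖dftN N (fun z => ∑ x : ZMod N, f x * f (z - x)) k‖ ^ 2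
      = (N : ℝ) ^ 2 * ∑ k : ZMod N, ‖dftN N f k‖ ^ 4 := by
    rw [Finset.mul_sum]
    refine Finset.sum_congr rfl fun k _ => ?_
    rw [dftN_conv, norm_mul, norm_pow, Complex.norm_natCast, mul_pow, ← pow_mul]
  have h4 := fourth_moment_lb N (fun k => ‖dftN N f k‖) (fun k => norm_nonneg _) hX
    (lt_of_lt_of_le one_pos hM) hA
  have hsum : ∑ z : ZMod N, ‖∑ x : ZMod N, f x * f (z - x)‖ ^ 2
      = (N : ℝ) ^ 3 * ∑ k : ZMod N, ‖dftN N f k‖ ^ 4 := by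
    rw [hconv] at hY
    have := hY.symm
    field_simp at this ⊢
    linarith [this]
  rw [hsum, div_eq_mul_inv, ← one_div]
  exact mul_le_mul_of_nonneg_left h4 (by positivity)

end aux

lemma normsq_c (z : ℂ) : ((‖z‖ : ℝ) : ℂ) ^ 2 = z * (starRingEnd ℂ) z := by
  rw [← Complex.ofReal_pow, Complex.mul_conj]
  norm_cast
  rw [Complex.normSq_eq_norm_sq]

lemma sum_swap3 {α : Type*} [Fintype α] (H : α → α → α → ℂ) :
    ∑ x : α, ∑ y : α, ∑ z : α, H x y z
      = ∑ z : α, ∑ x : α, ∑ y : α, H x y z :=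
  calc ∑ x : α, ∑ y : α, ∑ z : α, H x y z
      = ∑ x : α, ∑ z : α, ∑ y : α, H x y z :=
        Finset.sum_congr rfl fun _ _ => Finset.sum_comm
    _ = ∑ z : α, ∑ x : α, ∑ y : α, H x y z := Finset.sum_comm

theorem level_set_measure_lower_bound
    (N : ℕ) [NeZero N] (Q : ℤ) (hQ : 1 ≤ Q)
    (ψ : ZMod N → ℝ) (hψ : ∀ j : ZMod N, ∃ m : ℤ, ψ j = (2 * π / (Q : ℝ)) * m)
    (M : ℝ) (hM : 1 ≤ M)
    (hbound : ∀ n : ℤ, 0 ≤ n → n ≤ Q - 1 →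
      normAN N (fun j : ZMod N => Complex.exp (Complex.I * (n : ℂ) * (ψ j : ℂ))) ≤ M) :
    1 / M ^ 2 ≤
      (({p : ZMod N × ZMod N × ZMod N | ∃ m : ℤ,
          ψ p.1 + ψ (p.2.2 - p.1) - ψ p.2.1 - ψ (p.2.2 - p.2.1) = 2 * π * m}).ncard : ℝ)
        / (N : ℝ) ^ 3 := by
  classical
  have hNr : (0:ℝ) < N := Nat.cast_pos.2 (Nat.pos_of_ne_zero (NeZero.ne N))
  have hQ0 : (0:ℤ) < Q := by linarith
  have hQr : (0:ℝ) < (Q:ℝ) := by exact_mod_cast hQ0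
  have hQC : ((Q:ℤ):ℂ) ≠ 0 := Int.cast_ne_zero.2 (by omega)
  have hM0 : (0:ℝ) < M := lt_of_lt_of_le one_pos hM
  have hπ : (π:ℝ) ≠ 0 := Real.pi_ne_zero
  have h2πI : (2 * (π:ℂ) * Complex.I) ≠ 0 := by
    simp [Real.pi_ne_zero, Complex.I_ne_zero, Complex.ofReal_ne_zero]
  set θ : ZMod N × ZMod N × ZMod N → ℝ :=
    fun p => ψ p.1 + ψ (p.2.2 - p.1) - ψ p.2.1 - ψ (p.2.2 - p.2.1) with hθ
  set E : Set (ZMod N × ZMod N × ZMod N) := {p | ∃ m : ℤ, θ p = 2 * π * m} with hE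
  show 1 / M ^ 2 ≤ (E.ncard : ℝ) / (N:ℝ) ^ 3
  set f : ℕ → ZMod N → ℂ :=
    fun n j => Complex.exp (Complex.I * (n:ℂ) * (ψ j : ℂ)) with hf
  set R : ℕ → ℝ :=
    fun n => ∑ z : ZMod N, ‖∑ x : ZMod N, f n x * f n (z - x)‖ ^ 2 with hR
  -- Claim A
  have claimA : ∀ n : ℕ,
      ∑ p : ZMod N × ZMod N × ZMod N, Complex.exp (Complex.I * (n : ℂ) * (θ p : ℂ))
        = ((R n : ℝ) : ℂ) := by
    intro n
    have hc : ∀ w : ZMod N, (starRingEnd ℂ) (f n w)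
        = Complex.exp (-(Complex.I * (n:ℂ) * (ψ w : ℂ))) := by
      intro w
      rw [hf, ← Complex.exp_conj]
      congr 1
      simp [map_mul, Complex.conj_I]
    have hterm : ∀ x y z : ZMod N,
        (f n x * f n (z - x)) * (starRingEnd ℂ) (f n y * f n (z - y))
          = Complex.exp (Complex.I * (n : ℂ) * ((θ (x, y, z) : ℝ) : ℂ)) := by
      intro x y z
      rw [map_mul, hc, hc, hf]
      simp only
      rw [← Complex.exp_add, ← Complex.exp_add, ← Complex.exp_add]
      congr 1
      simp only [hθ]
      push_cast
      ring
    calc ∑ p : ZMod N × ZMod N × ZMod N, Complex.exp (Complex.I * (n:ℂ) * (θ p:ℂ))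
        = ∑ x : ZMod N, ∑ y : ZMod N, ∑ z : ZMod N,
            Complex.exp (Complex.I * (n:ℂ) * ((θ (x,y,z) : ℝ):ℂ)) := by
          rw [Fintype.sum_prod_type]
          exact Finset.sum_congr rfl fun x _ => Fintype.sum_prod_type _
      _ = ∑ z : ZMod N, ∑ x : ZMod N, ∑ y : ZMod N,
            Complex.exp (Complex.I * (n:ℂ) * ((θ (x,y,z) : ℝ):ℂ)) := sum_swap3 _
      _ = ∑ z : ZMod N, (∑ x : ZMod N, f n x * f n (z - x)) *
            (starRingEnd ℂ) (∑ y : ZMod N, f n y * f n (z - y)) := by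
          refine Finset.sum_congr rfl fun z _ => ?_
          rw [map_sum, Finset.sum_mul_sum]
          exact (Finset.sum_congr rfl fun x _ =>
            Finset.sum_congr rfl fun y _ => hterm x y z).symm
      _ = ((R n : ℝ):ℂ) := by
          rw [hR]
          push_cast
          exact (Finset.sum_congr rfl fun z _ => (normsq_c _)).symm
  -- Claim B
  have claimB : ∀ p : ZMod N × ZMod N × ZMod N,
      ∑ n ∈ Finset.range Q.toNat, Complex.exp (Complex.I * (n:ℂ) * (θ p : ℂ))
        = if p ∈ E then ((Q:ℤ):ℂ) else 0 := by
    intro p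
    obtain ⟨m1, h1⟩ := hψ p.1
    obtain ⟨m2, h2⟩ := hψ (p.2.2 - p.1)
    obtain ⟨m3, h3⟩ := hψ p.2.1
    obtain ⟨m4, h4⟩ := hψ (p.2.2 - p.2.1)
    set m : ℤ := m1 + m2 - m3 - m4 with hm
    have hθm : θ p = 2 * π / Q * m := by
      rw [hθ]
      simp only
      rw [h1, h2, h3, h4, hm]
      push_cast
      ring
    have hQtoC : ((Q.toNat : ℕ) : ℂ) = ((Q:ℤ):ℂ) := by
      exact_mod_cast congrArg (fun t : ℤ => (t:ℂ)) (Int.toNat_of_nonneg (le_of_lt hQ0))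
    have hzn : ∀ n : ℕ, Complex.exp (Complex.I * (n:ℂ) * (θ p : ℂ))
        = Complex.exp (2 * π * Complex.I * m / Q) ^ n := by
      intro n
      rw [← Complex.exp_nat_mul]
      congr 1
      rw [hθm]
      push_cast
      field_simp
    have hzQ : Complex.exp (2 * π * Complex.I * m / Q) ^ Q.toNat = 1 := by
      rw [← Complex.exp_nat_mul, hQtoC,
        show ((Q:ℤ):ℂ) * (2 * π * Complex.I * m / Q) = (m:ℂ) * (2 * π * Complex.I) from by
          field_simp]
      exact Complex.exp_int_mul_two_pi_mul_I m
    have hmem : p ∈ E ↔ (Q:ℤ) ∣ m := by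
      rw [hE]
      simp only [Set.mem_setOf_eq]
      constructor
      · rintro ⟨m', hm'⟩
        rw [hθm] at hm'
        have h2π : (2*π:ℝ) ≠ 0 := mul_ne_zero two_ne_zero hπ
        field_simp at hm'
        have hmr : (m:ℝ) = (m':ℝ) * Q :=
          mul_left_cancel₀ h2π (by linear_combination (2*π) * hm')
        have hmz : m = m' * Q := by exact_mod_cast hmr
        exact ⟨m', by rw [hmz, mul_comm]⟩
      · rintro ⟨t, ht⟩
        refine ⟨t, ?_⟩
        rw [hθm, ht]
        push_cast
        field_simp
    by_cases hp : p ∈ E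
    · rw [if_pos hp]
      obtain ⟨t, ht⟩ := hmem.1 hp
      have hz1 : Complex.exp (2 * π * Complex.I * m / Q) = 1 := by
        rw [ht, show 2 * (π:ℂ) * Complex.I * ((Q * t : ℤ):ℂ) / Q = (t:ℂ) * (2 * π * Complex.I)
          from by push_cast; field_simp]
        exact Complex.exp_int_mul_two_pi_mul_I t
      simp only [hzn, hz1, one_pow, Finset.sum_const, Finset.card_range, nsmul_eq_mul, mul_one]
      exact hQtoC
    · rw [if_neg hp]
      have hz1 : Complex.exp (2 * π * Complex.I * m / Q) ≠ 1 := by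
        intro h
        apply hp
        rw [Complex.exp_eq_one_iff] at h
        obtain ⟨t, ht⟩ := h
        have hmt : (m:ℂ) = t * Q := by
          field_simp at ht
          exact mul_left_cancel₀ h2πI (by linear_combination (2 * π * Complex.I) * ht)
        apply hmem.2
        have hmz : m = t * Q := by exact_mod_cast hmt
        exact ⟨t, by rw [hmz, mul_comm]⟩
      simp only [hzn]
      rw [geom_sum_eq hz1, hzQ]
      simp
  -- counting identity
  set F : Finset (ZMod N × ZMod N × ZMod N) := Finset.univ.filter (· ∈ E) with hF
  have hEcard : E.ncard = F.card := by
    rw [← Set.ncard_coe_finset]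
    congr 1
    ext p
    simp [hF]
  have hcount : ((Q:ℤ):ℂ) * (E.ncard : ℂ) = ∑ n ∈ Finset.range Q.toNat, ((R n : ℝ) : ℂ) := by
    have lhs : ∑ p : ZMod N × ZMod N × ZMod N, (if p ∈ E then ((Q:ℤ):ℂ) else 0)
        = ((Q:ℤ):ℂ) * (E.ncard : ℂ) := by
      rw [hEcard, ← Finset.sum_filter, Finset.sum_const, ← hF, nsmul_eq_mul]
      ring
    rw [← lhs]
    rw [← Finset.sum_congr rfl fun p (_ : p ∈ Finset.univ) => claimB p]
    rw [Finset.sum_comm]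
    exact Finset.sum_congr rfl fun n _ => claimA n
  have hcountR : (Q:ℝ) * (E.ncard : ℝ) = ∑ n ∈ Finset.range Q.toNat, R n := by
    have := hcount
    rw [show (∑ n ∈ Finset.range Q.toNat, ((R n : ℝ) : ℂ))
        = (((∑ n ∈ Finset.range Q.toNat, R n : ℝ)) : ℂ) from by push_cast; rfl] at this
    exact_mod_cast this
  -- lower bound each R n
  have hRn : ∀ n ∈ Finset.range Q.toNat, (N:ℝ)^3 / M^2 ≤ R n := by
    intro n hn
    rw [Finset.mem_range] at hn
    have hfnorm : ∀ j, ‖f n j‖ = 1 := by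
      intro j
      rw [hf]
      simp only
      rw [Complex.norm_exp]
      norm_num
    have hAn : ∑ k : ZMod N, ‖dftN N (f n) k‖ ≤ M := by
      have hb := hbound (n:ℤ) (Int.natCast_nonneg n) (by omega)
      have : (fun j : ZMod N => Complex.exp (Complex.I * ((n:ℤ):ℂ) * (ψ j : ℂ))) = f n := by
        funext j
        rw [hf]
        norm_num
      rw [this] at hb
      exact hb
    exact Rn_lb N (f n) hfnorm hM hAn
  -- combine
  have hsum : (Q:ℝ) * ((N:ℝ)^3 / M^2) ≤ (Q:ℝ) * (E.ncard : ℝ) := by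
    rw [hcountR]
    have := Finset.card_nsmul_le_sum (Finset.range Q.toNat) R ((N:ℝ)^3 / M^2) hRn
    rw [Finset.card_range, nsmul_eq_mul] at this
    have hQt : ((Q.toNat : ℕ) : ℝ) = (Q:ℝ) := by
      exact_mod_cast congrArg (fun t : ℤ => (t:ℝ)) (Int.toNat_of_nonneg (le_of_lt hQ0))
    rwa [hQt] at this
  have hfinal : (N:ℝ)^3 / M^2 ≤ (E.ncard : ℝ) :=
    le_of_mul_le_mul_left hsum hQr
  rw [le_div_iff₀ (by positivity : (0:ℝ) < (N:ℝ)^3)]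
  calc 1 / M^2 * (N:ℝ)^3 = (N:ℝ)^3 / M^2 := by ring
    _ ≤ (E.ncard : ℝ) := hfinal
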